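/- Let (X,d) be a complete metric space, 𝓘 ⊆ X a nonempty, closed and bounded subset, and {T_k}_{k∈ℕ} a sequence of maps T_k : X → X such that 𝓘 is an invariant set for {T_k} (i.e. T_k(𝓘) ⊆ 𝓘 for all k). Suppose each T_k is Lipschitz on 𝓘 with constant c_k ≥ 0 and that ∑_{k=1}^∞ ∏_{j=1}^k c_j < ∞. Then there exists a point a ∈ 𝓘 such that for every initial point x_0 ∈ 𝓘, the backward trajectory Ψ_k(x_0) := T_1 ∘ T_2 ∘ ⋯ ∘ T_k (x_0) converges to a as k → ∞; in particular the limit is independent of the choice of x_0 ∈ 𝓘. -/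

import Mathlib

open Filter Topology

/-- Backward trajectory of a sequence of self-maps:
`backwardTraj T k = T 0 ∘ T 1 ∘ ⋯ ∘ T (k-1)` (so the most recently applied map is the
innermost one). -/
def backwardTraj {α : Type*} (T : ℕ → α → α) : ℕ → α → α
  | 0 => id
  | k + 1 => fun a => backwardTraj T k (T k a)

/-- For a sequence of maps `T_k` leaving a nonempty closed bounded set `𝓘`
of a complete metric space invariant, each Lipschitz on `𝓘` with constant `c k`, and with
`∑_k ∏_{j≤k} c j < ∞`, the backward trajectories converge to a single point `a ∈ 𝓘`,
independent of the starting point in `𝓘`. -/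
theorem backwardTraj_tendsto_of_summable {X : Type*} [MetricSpace X] [CompleteSpace X]
    (I : Set X) (hne : I.Nonempty) (hcl : IsClosed I) (hbd : Bornology.IsBounded I)
    (T : ℕ → X → X) (hinv : ∀ k, Set.MapsTo (T k) I I)
    (c : ℕ → ℝ) (hc : ∀ k, 0 ≤ c k)
    (hlip : ∀ k, ∀ x ∈ I, ∀ y ∈ I, dist (T k x) (T k y) ≤ c k * dist x y)
    (hsum : Summable fun k => ∏ j ∈ Finset.range (k + 1), c j) :
    ∃ a ∈ I, ∀ x₀ ∈ I, Tendsto (fun k => backwardTraj T k x₀) atTop (𝓝 a) := by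
  set P : ℕ → ℝ := fun k => ∏ j ∈ Finset.range k, c j with hPdef
  have hP0 : ∀ k, 0 ≤ P k := fun k => Finset.prod_nonneg fun j _ => hc j
  -- membership
  have hmem : ∀ k, ∀ x ∈ I, backwardTraj T k x ∈ I := by
    intro k
    induction k with
    | zero => intro x hx; simpa [backwardTraj] using hx
    | succ k ih => intro x hx; exact ih _ (hinv k hx)
  -- Lipschitz bound for backward trajectories
  have hL : ∀ k, ∀ x ∈ I, ∀ y ∈ I,
      dist (backwardTraj T k x) (backwardTraj T k y) ≤ P k * dist x y := by
    intro k
    induction k with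
    | zero => intro x hx y hy; simp [backwardTraj, hPdef]
    | succ k ih =>
      intro x hx y hy
      have h1 := ih (T k x) (hinv k hx) (T k y) (hinv k hy)
      have h2 := hlip k x hx y hy
      calc dist (backwardTraj T (k + 1) x) (backwardTraj T (k + 1) y)
          = dist (backwardTraj T k (T k x)) (backwardTraj T k (T k y)) := rfl
        _ ≤ P k * dist (T k x) (T k y) := h1
        _ ≤ P k * (c k * dist x y) := by
            exact mul_le_mul_of_nonneg_left h2 (hP0 k)
        _ = P (k + 1) * dist x y := by
            simp [hPdef, Finset.prod_range_succ]; ring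
  have hPsum : Summable P := by
    exact (summable_nat_add_iff 1).mp (by simpa [hPdef] using hsum)
  have hPzero : Tendsto P atTop (𝓝 0) := hPsum.tendsto_atTop_zero
  set D := Metric.diam I with hD
  have hdistD : ∀ x ∈ I, ∀ y ∈ I, dist x y ≤ D := fun x hx y hy =>
    Metric.dist_le_diam_of_mem hbd hx hy
  obtain ⟨x, hx⟩ := hne
  set f : ℕ → X := fun k => backwardTraj T k x with hf
  have hbound : ∀ y ∈ I, ∀ k, dist (backwardTraj T k y) (f k) ≤ P k * D := by
    intro y hy k
    calc dist (backwardTraj T k y) (f k) ≤ P k * dist y x := hL k y hy x hx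
      _ ≤ P k * D := mul_le_mul_of_nonneg_left (hdistD y hy x hx) (hP0 k)
  have hcauchy : CauchySeq f := by
    apply cauchySeq_of_dist_le_of_summable (fun k => P k * D)
    · intro k
      have : dist (f k) (f (k + 1)) = dist (backwardTraj T k x) (backwardTraj T k (T k x)) := rfl
      rw [this]
      calc dist (backwardTraj T k x) (backwardTraj T k (T k x))
          ≤ P k * dist x (T k x) := hL k x hx (T k x) (hinv k hx)
        _ ≤ P k * D := mul_le_mul_of_nonneg_left (hdistD x hx (T k x) (hinv k hx)) (hP0 k)
    · exact hPsum.mul_right D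
  obtain ⟨a, ha⟩ := cauchySeq_tendsto_of_complete hcauchy
  have haI : a ∈ I := hcl.mem_of_tendsto ha (Eventually.of_forall fun k => hmem k x hx)
  refine ⟨a, haI, fun y hy => ?_⟩
  rw [tendsto_iff_dist_tendsto_zero]
  have hsq : ∀ k, dist (backwardTraj T k y) a ≤ P k * D + dist (f k) a := fun k =>
    (dist_triangle _ (f k) a).trans (add_le_add_left (hbound y hy k) _)
  have hlim : Tendsto (fun k => P k * D + dist (f k) a) atTop (𝓝 0) := by
    have h1 : Tendsto (fun k => P k * D) atTop (𝓝 0) := by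
      simpa using hPzero.mul_const D
    have h2 : Tendsto (fun k => dist (f k) a) atTop (𝓝 0) :=
      tendsto_iff_dist_tendsto_zero.mp ha
    simpa using h1.add h2
  exact squeeze_zero (fun k => dist_nonneg) hsq hlim
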